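/- Let G_s and G_t be graphs on the same vertex set [n] with splittance(G_s) ≤ k and splittance(G_t) ≤ k, such that G_t can be obtained from G_s by a sequence of edge updates containing at most r edge deletions. Let (A_s, B_s) and (A_t, B_t) be partitions realizing the splittance of G_s and G_t, respectively. Then C(|A_s ∩ B_t|, 2) ≤ r + 2k, and in particular |A_s ∩ B_t| = O(√(r + k)). -/

import Mathlib

open SimpleGraph Finset

def splittancePart {V : Type*} [Fintype V] [DecidableEq V] (G : SimpleGraph V)
    [DecidableRel G.Adj] (A : Finset V) : ℕ :=
  ((A.offDiag.filter fun p => ¬ G.Adj p.1 p.2).card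
    + (Aᶜ.offDiag.filter fun p => G.Adj p.1 p.2).card) / 2

noncomputable def splittance {V : Type*} [Fintype V] [DecidableEq V] (G : SimpleGraph V)
    [DecidableRel G.Adj] : ℕ :=
  sInf { m : ℕ | ∃ A : Finset V, splittancePart G A = m }

def IsIndep {V : Type*} (G : SimpleGraph V) (A : Set V) : Prop :=
  ∀ u ∈ A, ∀ v ∈ A, u ≠ v → ¬ G.Adj u v

def IsSplit {V : Type*} (G : SimpleGraph V) : Prop :=
  ∃ A : Set V, G.IsClique A ∧ IsIndep G Aᶜ

/-- A filter of `offDiag` by a symmetric predicate has even cardinality. -/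
lemma even_offDiag_filter {α : Type*} [DecidableEq α] [LinearOrder α] (s : Finset α)
    (p : α → α → Prop) [DecidableRel p] (hp : ∀ x y, p x y → p y x) :
    Even ((s.offDiag.filter fun q => p q.1 q.2).card) := by
  set t := s.offDiag.filter fun q => p q.1 q.2 with ht
  have h1 : (t.filter fun q => q.1 < q.2).card = (t.filter fun q => q.2 < q.1).card := by
    apply Finset.card_nbij' (fun q => q.swap) (fun q => q.swap)
    · intro a ha
      simp only [Finset.coe_filter, Set.mem_setOf_eq, ht, Finset.mem_filter,
        Finset.mem_offDiag, Prod.fst_swap, Prod.snd_swap] at ha ⊢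
      exact ⟨⟨⟨ha.1.1.2.1, ha.1.1.1, Ne.symm ha.1.1.2.2⟩, hp _ _ ha.1.2⟩, ha.2⟩
    · intro a ha
      simp only [Finset.coe_filter, Set.mem_setOf_eq, ht, Finset.mem_filter,
        Finset.mem_offDiag, Prod.fst_swap, Prod.snd_swap] at ha ⊢
      exact ⟨⟨⟨ha.1.1.2.1, ha.1.1.1, Ne.symm ha.1.1.2.2⟩, hp _ _ ha.1.2⟩, ha.2⟩
    · intro a _; exact Prod.swap_swap a
    · intro a _; exact Prod.swap_swap a
  have h2 : (t.filter fun q => ¬ q.1 < q.2) = t.filter fun q => q.2 < q.1 := by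
    apply Finset.filter_congr
    intro q hq
    simp only [ht, Finset.mem_filter, Finset.mem_offDiag] at hq
    constructor
    · intro h; exact lt_of_le_of_ne (not_lt.1 h) (Ne.symm hq.1.2.2)
    · intro h; exact not_lt.2 h.le
  have h3 := Finset.card_filter_add_card_filter_not (s := t)
    (p := fun q => q.1 < q.2)
  rw [h2, ← h1] at h3
  exact ⟨_, h3.symm⟩

lemma splittancePart_le {V : Type*} [Fintype V] [DecidableEq V] [LinearOrder V]
    (G : SimpleGraph V) [DecidableRel G.Adj] (A : Finset V) {k : ℕ}
    (h : splittancePart G A ≤ k) :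
    (A.offDiag.filter fun p => ¬ G.Adj p.1 p.2).card ≤ 2 * k ∧
    (Aᶜ.offDiag.filter fun p => G.Adj p.1 p.2).card ≤ 2 * k := by
  have e1 : Even ((A.offDiag.filter fun p => ¬ G.Adj p.1 p.2).card) :=
    even_offDiag_filter A (fun x y => ¬ G.Adj x y) (fun x y h hxy => h (hxy.symm))
  have e2 : Even ((Aᶜ.offDiag.filter fun p => G.Adj p.1 p.2).card) :=
    even_offDiag_filter Aᶜ (fun x y => G.Adj x y) (fun x y h => h.symm)
  unfold splittancePart at h
  have := (e1.add e2)
  obtain ⟨m, hm⟩ := this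
  have hmk : m ≤ k := by omega
  omega

set_option maxHeartbeats 1000000 in
theorem intersection_bound {n : ℕ} (Gs Gt : SimpleGraph (Fin n))
    [DecidableRel Gs.Adj] [DecidableRel Gt.Adj] (k r : ℕ)
    (hks : splittance Gs ≤ k) (hkt : splittance Gt ≤ k)
    (hdel : (Gs.edgeFinset \ Gt.edgeFinset).card ≤ r)
    (As At : Finset (Fin n))
    (hAs : splittancePart Gs As = splittance Gs)
    (hAt : splittancePart Gt At = splittance Gt) :
    ((As ∩ Atᶜ).card).choose 2 ≤ r + 2 * k ∧
      (As ∩ Atᶜ).card ≤ 2 * Nat.sqrt (r + k) + 3 := by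
  set X := As ∩ Atᶜ with hX
  set m := X.card with hm
  -- bounds on the two "bad pair" sets
  have hbs : (As.offDiag.filter fun p => ¬ Gs.Adj p.1 p.2).card ≤ 2 * k :=
    (splittancePart_le Gs As (by rw [hAs]; exact hks)).1
  have hbt : (Atᶜ.offDiag.filter fun p => Gt.Adj p.1 p.2).card ≤ 2 * k :=
    (splittancePart_le Gt At (by rw [hAt]; exact hkt)).2
  -- split X.offDiag into three parts
  have hsplit1 := Finset.card_filter_add_card_filter_not (s := X.offDiag)
    (p := fun p => Gs.Adj p.1 p.2)
  have hsplit2 := Finset.card_filter_add_card_filter_not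
    (s := X.offDiag.filter fun p => Gs.Adj p.1 p.2)
    (p := fun p => Gt.Adj p.1 p.2)
  rw [Finset.filter_filter, Finset.filter_filter] at hsplit2
  -- part 1 : nonedges of Gs within X
  have hp1 : ((X.offDiag.filter fun p => ¬ Gs.Adj p.1 p.2).card)
      ≤ (As.offDiag.filter fun p => ¬ Gs.Adj p.1 p.2).card := by
    apply Finset.card_le_card
    apply Finset.filter_subset_filter
    exact Finset.offDiag_mono (Finset.inter_subset_left)
  -- part 2 : edges of both within X
  have hp2 : ((X.offDiag.filter fun p => Gs.Adj p.1 p.2 ∧ Gt.Adj p.1 p.2).card)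
      ≤ (Atᶜ.offDiag.filter fun p => Gt.Adj p.1 p.2).card := by
    apply Finset.card_le_card
    intro p hp
    simp only [Finset.mem_filter] at hp ⊢
    refine ⟨Finset.offDiag_mono (Finset.inter_subset_right) hp.1, hp.2.2⟩
  -- part 3 : edges of Gs not in Gt within X, mapped 2-to-1 to deleted edges
  have hp3 : ((X.offDiag.filter fun p => Gs.Adj p.1 p.2 ∧ ¬ Gt.Adj p.1 p.2).card)
      ≤ 2 * (Gs.edgeFinset \ Gt.edgeFinset).card := by
    apply Finset.card_le_mul_card_image_of_maps_to
      (f := fun p => s(p.1, p.2))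
    · intro p hp
      simp only [Finset.mem_filter] at hp
      rw [Finset.mem_sdiff, SimpleGraph.mem_edgeFinset, SimpleGraph.mem_edgeFinset]
      exact ⟨hp.2.1, fun h => hp.2.2 h⟩
    · intro b hb
      induction b with
      | h x y =>
        have : ({p ∈ X.offDiag.filter fun p => Gs.Adj p.1 p.2 ∧ ¬ Gt.Adj p.1 p.2 |
            s(p.1, p.2) = s(x, y)}) ⊆ {(x, y), (y, x)} := by
          intro p hp
          simp only [Finset.mem_filter, Sym2.eq, Sym2.rel_iff', Prod.mk.injEq,
            Prod.swap_prod_mk] at hp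
          simp only [Finset.mem_insert, Finset.mem_singleton]
          rcases hp.2 with ⟨h1, h2⟩ | ⟨h1, h2⟩
          · left; rw [← h1, ← h2]
          · right; rw [← h1, ← h2]
        calc _ ≤ ({(x, y), (y, x)} : Finset (Fin n × Fin n)).card :=
              Finset.card_le_card this
          _ ≤ 2 := Finset.card_insert_le _ _ |>.trans (by simp)
  have hcard : X.offDiag.card = m * m - m := by
    rw [Finset.offDiag_card]
  have hmm : m * (m - 1) = m * m - m := by
    cases m with
    | zero => simp
    | succ t => simp only [Nat.succ_sub_one]; ring_nf; omega
  have key : m * (m - 1) ≤ 2 * r + 4 * k := by rw [hmm]; omega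
  have hchoose : m.choose 2 ≤ r + 2 * k := by
    rw [Nat.choose_two_right]
    obtain ⟨t, ht⟩ : Even (m * (m - 1)) := Nat.even_mul_pred_self m
    omega
  refine ⟨hchoose, ?_⟩
  -- second part
  by_contra hcon
  push_neg at hcon
  set s := Nat.sqrt (r + k) with hs
  have hrk : r + k ≤ s * s + 2 * s := by
    have := Nat.lt_succ_sqrt (r + k)
    nlinarith [Nat.lt_succ_sqrt (r + k)]
  have hm4 : 2 * s + 4 ≤ m := hcon
  have : (2 * s + 4) * (2 * s + 3) ≤ m * (m - 1) :=
    Nat.mul_le_mul hm4 (by omega)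
  nlinarith
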